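/- (Hashing Lemma) Let X be a random variable on a finite set 𝒳 of even cardinality |𝒳| ≥ 2, and let F be a uniform balanced random predicate on 𝒳, independent of X. Then d(X) ≤ (3/2)·√|𝒳| · d(F(X)|F), where d(X) := d(P_X) and d(F(X)|F) := Σ_f P_F(f)·d(P_{f(X)}). -/

import Mathlib

open Finset

/-- The distance of a distribution `P` on a finite set `Z` from the uniform
distribution: `d(P) = (1/2) ∑_z |P z - 1/|Z||`. -/
noncomputable def distUnif {Z : Type*} [Fintype Z] (P : Z → ℝ) : ℝ :=
  (1 / 2) * ∑ z, |P z - 1 / (Fintype.card Z : ℝ)|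

/-- The balanced predicates on a finite type `𝒳`: predicates `f : 𝒳 → Bool` with
`|f⁻¹(0)| = |f⁻¹(1)|` (identifying `{0,1}` with `Bool`). -/
def Bal (𝒳 : Type*) [Fintype 𝒳] [DecidableEq 𝒳] : Finset (𝒳 → Bool) :=
  univ.filter (fun f =>
    (univ.filter (fun x => f x = false)).card = (univ.filter (fun x => f x = true)).card)

/-- The distribution of a uniform balanced random predicate on `𝒳`. -/
noncomputable def PF {𝒳 : Type*} [Fintype 𝒳] [DecidableEq 𝒳] (f : 𝒳 → Bool) : ℝ :=
  if f ∈ Bal 𝒳 then ((Bal 𝒳).card : ℝ)⁻¹ else 0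


private lemma int_choose_succ (n k : ℕ) :
    ((n.choose (k+1)) : ℤ) * (k+1) = (n.choose k : ℤ) * ((n:ℤ) - k) := by
  rcases le_or_gt k n with h | h
  · have h1 := Nat.choose_succ_right_eq n k
    have h2 : ((n.choose (k+1) * (k+1) : ℕ) : ℤ) = ((n.choose k * (n-k) : ℕ) : ℤ) := by
      exact_mod_cast congrArg (fun t : ℕ => (t : ℤ)) h1
    push_cast [Nat.cast_sub h] at h2
    linarith
  · have h1 : n.choose (k+1) = 0 := Nat.choose_eq_zero_of_lt (by omega)
    have h2 : n.choose k = 0 := Nat.choose_eq_zero_of_lt h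
    simp [h1, h2]

private lemma key_sum (a b m : ℕ) (hm : 1 ≤ m) (ha : 1 ≤ a) (hb : 1 ≤ b)
    (hab : a + b = 2*m) :
    ∑ k ∈ Finset.range (m+1), |2*(m:ℤ)*k - a*m| * a.choose k * b.choose (m-k)
    = 2 * (((a+1)/2 : ℕ) : ℤ) * (((b+1)/2 : ℕ) : ℤ) * (a.choose ((a+1)/2) : ℤ)
        * (b.choose (m - (a+1)/2) : ℤ) := by
  set m₀ := (a+1)/2 with hm₀def
  have hm₀m : m₀ ≤ m := by omega
  set H : ℕ → ℤ := fun k =>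
    if k ≤ m then (k:ℤ) * ((k:ℤ) + b - m) * a.choose k * b.choose (m-k) else 0 with hHdef
  have habZ : (a:ℤ) + b = 2*m := by exact_mod_cast hab
  have step : ∀ k, k ≤ m →
      H k - H (k+1) = (2*(m:ℤ)*k - a*m) * a.choose k * b.choose (m-k) := by
    intro k hk
    rcases eq_or_lt_of_le hk with hkm | hkm
    · subst hkm
      have h1 : H k = (k:ℤ) * ((k:ℤ) + b - k) * a.choose k * b.choose (k-k) := by
        rw [hHdef]; simp
      have h2 : H (k+1) = 0 := by rw [hHdef]; simp
      rw [h1, h2, Nat.sub_self, Nat.choose_zero_right]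
      have hb2 : (b:ℤ) = 2*k - a := by linarith
      push_cast
      linear_combination ((a.choose k : ℤ) * k) * hb2
    · have hk1 : k + 1 ≤ m := hkm
      have h1 : H k = (k:ℤ) * ((k:ℤ) + b - m) * a.choose k * b.choose (m-k) := by
        simp [hHdef, hk]
      have h2 : H (k+1) = ((k:ℤ)+1) * (((k:ℤ)+1) + b - m) * a.choose (k+1) * b.choose (m-(k+1)) := by
        simp [hHdef, hk1]
      rw [h1, h2]
      have e1 := int_choose_succ a k
      have hidx : m - (k+1) = (m - k - 1) := by omega
      have hidx2 : (m - k - 1) + 1 = m - k := by omega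
      have e2' := int_choose_succ b (m-k-1)
      rw [hidx2] at e2'
      have c2 : ((m-k-1 : ℕ) : ℤ) = (m:ℤ) - k - 1 := by
        have : (k+1) ≤ m := hk1
        omega
      rw [c2] at e2'
      rw [hidx]
      -- e1 : (choose a (k+1)) * (k+1) = choose a k * (a - k)
      -- e2' : (choose b (m-k)) * ((m-k)) = choose b (m-k-1) * (b - (m-k-1))
      set X := (a.choose k : ℤ)
      set X' := (a.choose (k+1) : ℤ)
      set Y := (b.choose (m-k) : ℤ)
      set Y' := (b.choose (m-k-1) : ℤ)
      set K := (k : ℤ)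
      linear_combination (-((K+1) + (b:ℤ) - m) * Y') * e1 + (X * ((a:ℤ) - K)) * e2'
        + (X * Y * K) * habZ
  have total : ∑ k ∈ Finset.range (m+1), (2*(m:ℤ)*k - a*m) * a.choose k * b.choose (m-k) = 0 := by
    rw [← Finset.sum_congr rfl (fun k hk => (step k (by
      simp only [Finset.mem_range] at hk; omega)))]
    rw [Finset.sum_range_sub' H (m+1)]
    simp [hHdef]
  have partial_ : ∑ k ∈ Finset.range m₀, (2*(m:ℤ)*k - a*m) * a.choose k * b.choose (m-k)
      = - H m₀ := by
    rw [← Finset.sum_congr rfl (fun k hk => (step k (by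
      simp only [Finset.mem_range] at hk; omega)))]
    rw [Finset.sum_range_sub' H m₀]
    simp [hHdef]
  -- split the absolute-value sum
  have habs : ∑ k ∈ Finset.range (m+1), |2*(m:ℤ)*k - a*m| * a.choose k * b.choose (m-k)
      = 2 * H m₀ := by
    have hsplit : Finset.range (m+1) = Finset.range m₀ ∪ Finset.Ico m₀ (m+1) := by
      rw [Finset.range_eq_Ico, Finset.range_eq_Ico]
      rw [Finset.Ico_union_Ico_eq_Ico (by omega) (by omega)]
    have hdisj : Disjoint (Finset.range m₀) (Finset.Ico m₀ (m+1)) := by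
      simp [Finset.disjoint_left, Finset.mem_range, Finset.mem_Ico]
      omega
    rw [hsplit, Finset.sum_union hdisj]
    have hneg : ∀ k ∈ Finset.range m₀,
        |2*(m:ℤ)*k - a*m| * a.choose k * b.choose (m-k)
        = -((2*(m:ℤ)*k - a*m) * a.choose k * b.choose (m-k)) := by
      intro k hk
      simp only [Finset.mem_range] at hk
      have h2k : 2*k + 1 ≤ a := by omega
      have : (2*(m:ℤ)*k - a*m) ≤ -m := by
        have hc : (2*(k:ℤ) + 1) ≤ a := by exact_mod_cast h2k
        have hmz : (1:ℤ) ≤ m := by exact_mod_cast hm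
        nlinarith
      rw [abs_of_nonpos (by linarith)]
      ring
    have hpos : ∀ k ∈ Finset.Ico m₀ (m+1),
        |2*(m:ℤ)*k - a*m| * a.choose k * b.choose (m-k)
        = (2*(m:ℤ)*k - a*m) * a.choose k * b.choose (m-k) := by
      intro k hk
      simp only [Finset.mem_Ico] at hk
      have h2k : a ≤ 2*k := by omega
      have : (0:ℤ) ≤ 2*(m:ℤ)*k - a*m := by
        have hc : (a:ℤ) ≤ 2*k := by exact_mod_cast h2k
        have hmz : (0:ℤ) ≤ m := by exact_mod_cast Nat.zero_le m
        nlinarith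
      rw [abs_of_nonneg this]
    rw [Finset.sum_congr rfl hneg, Finset.sum_congr rfl hpos]
    have hIco : ∑ k ∈ Finset.Ico m₀ (m+1), (2*(m:ℤ)*k - a*m) * a.choose k * b.choose (m-k)
        = H m₀ := by
      rw [Finset.sum_Ico_eq_sub _ (by omega : m₀ ≤ m+1), total, partial_]
      ring
    rw [hIco, Finset.sum_neg_distrib, partial_]
    ring
  rw [habs]
  have hHm₀ : H m₀ = (m₀:ℤ) * (((b+1)/2 : ℕ) : ℤ) * a.choose m₀ * b.choose (m - m₀) := by
    have h1 : H m₀ = (m₀:ℤ) * ((m₀:ℤ) + b - m) * a.choose m₀ * b.choose (m-m₀) := by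
      simp [hHdef, hm₀m]
    rw [h1]
    have : (m₀:ℤ) + b - m = (((b+1)/2 : ℕ) : ℤ) := by omega
    rw [this]
  rw [hHm₀]; ring

private noncomputable def gseq (k : ℕ) : ℝ := (Nat.centralBinom k : ℝ) / 4^k

private lemma gseq_pos (k : ℕ) : 0 < gseq k := by
  unfold gseq
  apply div_pos (by exact_mod_cast Nat.centralBinom_pos k) (by positivity)

private lemma gseq_zero : gseq 0 = 1 := by simp [gseq, Nat.centralBinom]

private lemma gseq_one : gseq 1 = 1/2 := by
  norm_num [gseq, show Nat.centralBinom 1 = 2 from rfl]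

private lemma gseq_two : gseq 2 = 3/8 := by
  norm_num [gseq, show Nat.centralBinom 2 = 6 from rfl]

private lemma gseq_succ (k : ℕ) : gseq (k+1) * (2*(k:ℝ)+2) = gseq k * (2*(k:ℝ)+1) := by
  have h := Nat.succ_mul_centralBinom_succ k
  have hc : ((k:ℝ)+1) * (Nat.centralBinom (k+1) : ℝ) = 2*(2*(k:ℝ)+1) * (Nat.centralBinom k : ℝ) := by
    exact_mod_cast congrArg (fun t : ℕ => (t:ℝ)) h
  unfold gseq
  have h4 : (4:ℝ)^(k+1) = 4 * 4^k := by ring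
  rw [div_mul_eq_mul_div, div_mul_eq_mul_div, div_eq_div_iff (by positivity) (by positivity),
    h4]
  linear_combination (2*(4:ℝ)^k) * hc

private lemma gseq_antitone : ∀ i j : ℕ, i ≤ j → gseq j ≤ gseq i := by
  have hstep : ∀ k : ℕ, gseq (k+1) ≤ gseq k := by
    intro k
    have h := gseq_succ k
    have hp := gseq_pos k
    nlinarith
  intro i j hij
  induction j with
  | zero => simp_all
  | succ n ih =>
    rcases Nat.lt_or_ge i (n+1) with h | h
    · exact le_trans (hstep n) (ih (by omega))
    · have : i = n+1 := by omega
      subst this; rfl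

private lemma gseq_lower : ∀ k : ℕ, 1 ≤ k → 5/4 ≤ gseq k^2 * (4*(k:ℝ)+1) := by
  intro k hk
  induction k with
  | zero => omega
  | succ n ih =>
    rcases Nat.lt_or_ge n 1 with h | h
    · have : n = 0 := by omega
      subst this
      rw [gseq_one]; norm_num
    · have ihn := ih h
      have e := gseq_succ n
      have h1 : gseq (n+1)^2 * (2*(n:ℝ)+2)^2 = gseq n^2 * (2*(n:ℝ)+1)^2 := by
        have := congrArg (fun t : ℝ => t^2) e
        simpa [mul_pow] using this
      have hp := gseq_pos n
      have hkey : (gseq (n+1)^2 * (4*((n:ℝ)+1)+1) - 5/4) * (2*(n:ℝ)+2)^2 ≥ 0 := by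
        nlinarith [h1, ihn, sq_nonneg (gseq n)]
      have hq : (0:ℝ) < (2*(n:ℝ)+2)^2 := by positivity
      push_cast
      nlinarith [hkey, hq]

private lemma gseq_upper : ∀ k : ℕ, 1 ≤ k → gseq k^2 * (4*(k:ℝ)+2) ≤ 3/2 := by
  intro k hk
  induction k with
  | zero => omega
  | succ n ih =>
    rcases Nat.lt_or_ge n 1 with h | h
    · have : n = 0 := by omega
      subst this
      rw [gseq_one]; norm_num
    · have ihn := ih h
      have e := gseq_succ n
      have h1 : gseq (n+1)^2 * (2*(n:ℝ)+2)^2 = gseq n^2 * (2*(n:ℝ)+1)^2 := by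
        have := congrArg (fun t : ℝ => t^2) e
        simpa [mul_pow] using this
      have hp := gseq_pos n
      have hkey : (3/2 - gseq (n+1)^2 * (4*((n:ℝ)+1)+2)) * (2*(n:ℝ)+2)^2 ≥ 0 := by
        nlinarith [h1, ihn, sq_nonneg (gseq (n+1))]
      have hq : (0:ℝ) < (2*(n:ℝ)+2)^2 := by positivity
      push_cast
      nlinarith [hkey, hq]

private lemma gk_ineq (ν α β : ℕ) (hν : 1 ≤ ν) (hsum : α + β = ν ∨ α + β + 1 = ν) :
    4 * gseq ν ≤ 3 * Real.sqrt (2*ν) * (gseq α * gseq β) := by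
  have hab : α + β ≤ ν := by omega
  have hs0 : (0:ℝ) ≤ 2*(ν:ℝ) := by positivity
  have hsqrt2 : (4/3 : ℝ) ≤ Real.sqrt (2*ν) := by
    rw [show (4/3:ℝ) = Real.sqrt ((4/3)^2) from (Real.sqrt_sq (by norm_num)).symm]
    apply Real.sqrt_le_sqrt
    have : (1:ℝ) ≤ (ν:ℝ) := by exact_mod_cast hν
    nlinarith
  rcases Nat.eq_zero_or_pos α with hα | hα
  · subst hα
    rw [gseq_zero]
    have h1 : gseq ν ≤ gseq β := gseq_antitone β ν (by omega)
    have h2 := gseq_pos ν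
    have h3 := gseq_pos β
    nlinarith
  rcases Nat.eq_zero_or_pos β with hβ | hβ
  · subst hβ
    rw [gseq_zero]
    have h1 : gseq ν ≤ gseq α := gseq_antitone α ν (by omega)
    have h2 := gseq_pos ν
    have h3 := gseq_pos α
    nlinarith
  rcases Nat.lt_or_ge ν 3 with hν3 | hν3
  · -- ν = 2, α = β = 1
    have hν2 : ν = 2 := by omega
    have hα1 : α = 1 := by omega
    have hβ1 : β = 1 := by omega
    subst hν2; subst hα1; subst hβ1
    rw [gseq_one, gseq_two]
    have : Real.sqrt (2*(2:ℕ)) = 2 := by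
      rw [show (2*((2:ℕ):ℝ)) = 2^2 by norm_num]
      exact Real.sqrt_sq (by norm_num)
    rw [this]
    norm_num
  · -- main case via moment bounds
    have hu := gseq_upper ν hν
    have hlα := gseq_lower α hα
    have hlβ := gseq_lower β hβ
    have hprod : ((4*(α:ℝ)+1)) * ((4*(β:ℝ)+1)) ≤ (2*(ν:ℝ)+1)^2 := by
      have hc : (α:ℝ) + β ≤ ν := by exact_mod_cast hab
      nlinarith [sq_nonneg ((α:ℝ) - β)]
    have hgα := gseq_pos α
    have hgβ := gseq_pos β
    have hgν := gseq_pos ν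
    have hν3' : (3:ℝ) ≤ (ν:ℝ) := by exact_mod_cast hν3
    -- squared inequality : 16 gν² ≤ 18 ν gα² gβ²
    have hmul : (5/4 : ℝ) * (5/4) ≤ (gseq α^2 * (4*(α:ℝ)+1)) * (gseq β^2 * (4*(β:ℝ)+1)) := by
      apply mul_le_mul hlα hlβ (by norm_num) (by nlinarith)
    have hsq : 16 * gseq ν^2 ≤ 9 * (2*(ν:ℝ)) * (gseq α * gseq β)^2 := by
      nlinarith [hmul, hprod, hu, mul_pos hgα hgβ, sq_nonneg (gseq α * gseq β),
        mul_pos (mul_pos hgα hgα) (mul_pos hgβ hgβ)]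
    have hsB : 0 ≤ 3 * Real.sqrt (2*ν) * (gseq α * gseq β) := by
      have := Real.sqrt_nonneg (2*(ν:ℝ))
      positivity
    have hss : Real.sqrt (2*ν) ^ 2 = 2*(ν:ℝ) := Real.sq_sqrt hs0
    nlinarith [hsq, hss, hsB, hgν, Real.sqrt_nonneg (2*(ν:ℝ))]

private lemma cb_eq_g (k : ℕ) : (Nat.centralBinom k : ℝ) = gseq k * 4^k := by
  unfold gseq; field_simp

private lemma star_ineq (a b m : ℕ) (hm : 1 ≤ m) (ha : 1 ≤ a) (hb : 1 ≤ b)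
    (hab : a + b = 2*m) :
    ((a:ℝ)*b) * ((2*m).choose m : ℝ) ≤ 3 * Real.sqrt (2*m) *
      ( (((a+1)/2 : ℕ) : ℝ) * (((b+1)/2 : ℕ) : ℝ) * (a.choose ((a+1)/2) : ℝ)
        * (b.choose (m - (a+1)/2) : ℝ) ) := by
  have hcb : ((2*m).choose m : ℝ) = gseq m * 4^m := by
    rw [show (2*m).choose m = Nat.centralBinom m from rfl, cb_eq_g]
  rcases Nat.even_or_odd a with hae | hao
  · -- a, b both even
    obtain ⟨α, hα⟩ := hae
    have hα2 : a = 2*α := by omega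
    have hbe : ∃ β, b = 2*β := ⟨b/2, by omega⟩
    obtain ⟨β, hβ2⟩ := hbe
    have hαβ : α + β = m := by omega
    have hα1 : 1 ≤ α := by omega
    have hβ1 : 1 ≤ β := by omega
    have h1 : (a+1)/2 = α := by omega
    have h2 : (b+1)/2 = β := by omega
    have h3 : m - (a+1)/2 = β := by omega
    rw [h3, h1, h2, hα2, hβ2]
    have hca : (2*α).choose α = Nat.centralBinom α := rfl
    have hcb' : (2*β).choose β = Nat.centralBinom β := rfl
    rw [hca, hcb', hcb, cb_eq_g, cb_eq_g]
    have hgk := gk_ineq m α β hm (Or.inl hαβ)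
    have h4 : (0:ℝ) < 4^α := by positivity
    have h5 : (0:ℝ) < 4^β := by positivity
    have h4m : (4:ℝ)^m = 4^α * 4^β := by
      rw [← pow_add, hαβ]
    have hαpos : (0:ℝ) < α := by exact_mod_cast hα1
    have hβpos : (0:ℝ) < β := by exact_mod_cast hβ1
    have hS := Real.sqrt_nonneg (2*(m:ℝ))
    -- goal: (2α)(2β) gm 4^m ≤ 3 √(2m) (α β (gα 4^α)(gβ 4^β))
    have expand : 3 * Real.sqrt (2*(m:ℕ)) * ((α:ℝ) * β * (gseq α * 4^α) * (gseq β * 4^β))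
        = ((α:ℝ)*β*(4^α*4^β)) * (3 * Real.sqrt (2*(m:ℕ)) * (gseq α * gseq β)) := by ring
    calc ((2*α:ℕ):ℝ)*((2*β:ℕ):ℝ) * (gseq m * 4^m)
        = ((α:ℝ)*β*(4^α*4^β)) * (4 * gseq m) := by push_cast; rw [h4m]; ring
      _ ≤ ((α:ℝ)*β*(4^α*4^β)) * (3 * Real.sqrt (2*(m:ℕ)) * (gseq α * gseq β)) := by
          apply mul_le_mul_of_nonneg_left hgk (by positivity)
      _ = 3 * Real.sqrt (2*(m:ℕ)) * ((α:ℝ) * β * (gseq α * 4^α) * (gseq β * 4^β)) := by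
          rw [expand]
  · -- a, b both odd
    obtain ⟨α, hα⟩ := hao
    have hbo : ∃ β, b = 2*β+1 := ⟨b/2, by omega⟩
    obtain ⟨β, hβ⟩ := hbo
    have hαβ : α + β + 1 = m := by omega
    have h1 : (a+1)/2 = α+1 := by omega
    have h2 : (b+1)/2 = β+1 := by omega
    have h3 : m - (a+1)/2 = β := by omega
    rw [h3, h1, h2, hα, hβ]
    -- identities
    have idA : ((α:ℝ)+1) * ((2*α+1).choose (α+1) : ℝ) = ((2*α+1:ℕ):ℝ) * (Nat.centralBinom α : ℝ) := by
      have h := Nat.add_one_mul_choose_eq (2*α) α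
      -- (2α+1) * C(2α, α) = C(2α+1, α+1) * (α+1)
      have : (2*α+1) * ((2*α).choose α) = ((2*α+1).choose (α+1)) * (α+1) := by
        simpa [Nat.succ_eq_add_one] using h
      have := congrArg (fun t : ℕ => (t:ℝ)) this
      push_cast at this ⊢
      rw [show ((2*α).choose α) = Nat.centralBinom α from rfl] at this
      linarith
    have idB : ((β:ℝ)+1) * ((2*β+1).choose β : ℝ) = ((2*β+1:ℕ):ℝ) * (Nat.centralBinom β : ℝ) := by
      have hsymm : (2*β+1).choose β = (2*β+1).choose (β+1) := by
        rw [← Nat.choose_symm (by omega : β+1 ≤ 2*β+1)]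
        congr 1
        omega
      have h := Nat.add_one_mul_choose_eq (2*β) β
      have : (2*β+1) * ((2*β).choose β) = ((2*β+1).choose (β+1)) * (β+1) := by
        simpa [Nat.succ_eq_add_one] using h
      have := congrArg (fun t : ℕ => (t:ℝ)) this
      push_cast at this ⊢
      rw [show ((2*β).choose β) = Nat.centralBinom β from rfl] at this
      rw [hsymm]
      push_cast
      linarith
    have hgk := gk_ineq m α β hm (Or.inr hαβ)
    have h4m : (4:ℝ)^m = 4 * (4^α * 4^β) := by
      rw [show m = α+β+1 from hαβ.symm]; ring
    have hS := Real.sqrt_nonneg (2*(m:ℝ))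
    have key : (((2*α+1:ℕ)):ℝ) * ((2*β+1:ℕ):ℝ) * (4 * gseq m)
        ≤ ((2*α+1:ℕ):ℝ) * ((2*β+1:ℕ):ℝ) * (3 * Real.sqrt (2*(m:ℕ)) * (gseq α * gseq β)) := by
      apply mul_le_mul_of_nonneg_left hgk (by positivity)
    calc ((2*α+1:ℕ):ℝ)*((2*β+1:ℕ):ℝ) * ((2*m).choose m : ℝ)
        = (((2*α+1:ℕ)):ℝ) * ((2*β+1:ℕ):ℝ) * (4 * gseq m) * (4^α*4^β) := by
          rw [hcb, h4m]; ring
      _ ≤ (((2*α+1:ℕ)):ℝ) * ((2*β+1:ℕ):ℝ) * (3 * Real.sqrt (2*(m:ℕ)) * (gseq α * gseq β)) * (4^α*4^β) := by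
          exact mul_le_mul_of_nonneg_right key (by positivity)
      _ = 3 * Real.sqrt (2*(m:ℕ)) * ( (((2*α+1:ℕ)):ℝ) * (Nat.centralBinom α : ℝ) *
            ( ((2*β+1:ℕ):ℝ) * (Nat.centralBinom β : ℝ) ) ) := by
          rw [cb_eq_g, cb_eq_g]; ring
      _ = 3 * Real.sqrt (2*(m:ℕ)) * ( (((α:ℝ)+1) * ((2*α+1).choose (α+1) : ℝ)) *
            ( ((β:ℝ)+1) * ((2*β+1).choose β : ℝ) ) ) := by
          rw [idA, idB]
      _ = 3 * Real.sqrt (2*(m:ℕ)) *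
          ((((α+1:ℕ)):ℝ) * (((β+1:ℕ)):ℝ) * ((2*α+1).choose (α+1) : ℝ)
            * ((2*β+1).choose β : ℝ)) := by
          push_cast; ring

private lemma count_mem {𝒳 : Type} [DecidableEq 𝒳] (s : Finset 𝒳) (x : 𝒳) (hx : x ∈ s) (k : ℕ) :
    ((s.powersetCard (k+1)).filter (fun U => x ∈ U)).card = (s.card - 1).choose k := by
  have h : ((s.powersetCard (k+1)).filter (fun U => x ∈ U)).card
      = ((s.erase x).powersetCard k).card := by
    apply Finset.card_nbij' (i := fun U => U.erase x) (j := fun W => insert x W)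
    · intro U hU
      rw [Finset.mem_coe, Finset.mem_filter, Finset.mem_powersetCard] at hU
      rw [Finset.mem_coe, Finset.mem_powersetCard]
      constructor
      · exact Finset.erase_subset_erase x hU.1.1
      · rw [Finset.card_erase_of_mem hU.2, hU.1.2]
        omega
    · intro W hW
      rw [Finset.mem_coe, Finset.mem_powersetCard] at hW
      have hxW : x ∉ W := fun h => (Finset.mem_erase.mp (hW.1 h)).1 rfl
      rw [Finset.mem_coe, Finset.mem_filter, Finset.mem_powersetCard]
      refine ⟨⟨?_, ?_⟩, Finset.mem_insert_self x W⟩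
      · intro y hy
        rcases Finset.mem_insert.mp hy with rfl | hy'
        · exact hx
        · exact (Finset.mem_erase.mp (hW.1 hy')).2
      · rw [Finset.card_insert_of_notMem hxW, hW.2]
    · intro U hU
      rw [Finset.mem_coe, Finset.mem_filter] at hU
      exact Finset.insert_erase hU.2
    · intro W hW
      rw [Finset.mem_coe, Finset.mem_powersetCard] at hW
      have hxW : x ∉ W := fun h => (Finset.mem_erase.mp (hW.1 h)).1 rfl
      exact Finset.erase_insert hxW
  rw [h, Finset.card_powersetCard, Finset.card_erase_of_mem hx]

private lemma sum_psc_weight {𝒳 : Type} [DecidableEq 𝒳] (s : Finset 𝒳) (r : 𝒳 → ℝ) (k : ℕ) :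
    ∑ U ∈ s.powersetCard (k+1), ∑ y ∈ U, r y
      = ((s.card - 1).choose k : ℝ) * ∑ y ∈ s, r y := by
  have h1 : ∀ U ∈ s.powersetCard (k+1),
      (∑ y ∈ U, r y) = ∑ y ∈ s, (if y ∈ U then r y else 0) := by
    intro U hU
    rw [Finset.sum_ite_mem, Finset.inter_eq_right.mpr (Finset.mem_powersetCard.mp hU).1]
  rw [Finset.sum_congr rfl h1, Finset.sum_comm, Finset.mul_sum]
  apply Finset.sum_congr rfl
  intro y hy
  rw [Finset.sum_ite, Finset.sum_const, Finset.sum_const_zero, add_zero, nsmul_eq_mul,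
    count_mem s y hy k]

private lemma union_inter_eq {𝒳 : Type} [Fintype 𝒳] [DecidableEq 𝒳] {A U V : Finset 𝒳}
    (hU : U ⊆ A) (hV : Disjoint V A) : (U ∪ V) ∩ A = U := by
  rw [Finset.union_inter_distrib_right, Finset.inter_eq_left.mpr hU,
    Finset.disjoint_iff_inter_eq_empty.mp hV, Finset.union_empty]

private lemma disjoint_of_subsets {𝒳 : Type} [Fintype 𝒳] [DecidableEq 𝒳] {A U V : Finset 𝒳}
    (hU : U ⊆ A) (hV : V ⊆ Aᶜ) : Disjoint U V :=
  Finset.disjoint_left.mpr fun y hyU hyV => (Finset.mem_compl.mp (hV hyV)) (hU hyU)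

private lemma sum_split {𝒳 : Type} [Fintype 𝒳] [DecidableEq 𝒳] (m : ℕ) (A : Finset 𝒳)
    (F : Finset 𝒳 → ℝ) :
    ∑ S ∈ (univ : Finset 𝒳).powersetCard m, F S
      = ∑ k ∈ Finset.range (m+1), ∑ U ∈ A.powersetCard k,
          ∑ V ∈ Aᶜ.powersetCard (m-k), F (U ∪ V) := by
  have hmaps : ∀ S ∈ (univ : Finset 𝒳).powersetCard m,
      (S ∩ A).card ∈ Finset.range (m+1) := by
    intro S hS
    rw [Finset.mem_range]
    have h1 : (S ∩ A).card ≤ S.card := Finset.card_le_card Finset.inter_subset_left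
    have h2 : S.card = m := (Finset.mem_powersetCard.mp hS).2
    omega
  rw [← Finset.sum_fiberwise_of_maps_to (g := fun S => (S ∩ A).card) hmaps F]
  apply Finset.sum_congr rfl
  intro k hk
  have hkm : k ≤ m := by
    rw [Finset.mem_range] at hk; omega
  have hprod : ∑ S ∈ (univ.powersetCard m).filter (fun S => (S ∩ A).card = k), F S
      = ∑ p ∈ A.powersetCard k ×ˢ Aᶜ.powersetCard (m-k), F (p.1 ∪ p.2) := by
    apply Finset.sum_nbij' (i := fun S => (S ∩ A, S ∩ Aᶜ)) (j := fun p => p.1 ∪ p.2)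
    · intro S hS
      rw [Finset.mem_filter, Finset.mem_powersetCard] at hS
      rw [Finset.mem_product, Finset.mem_powersetCard, Finset.mem_powersetCard]
      have hdecomp : (S ∩ A) ∪ (S ∩ Aᶜ) = S := by
        rw [← Finset.inter_union_distrib_left, Finset.union_compl, Finset.inter_univ]
      have hdisj : Disjoint (S ∩ A) (S ∩ Aᶜ) :=
        disjoint_of_subsets (Finset.inter_subset_right) (Finset.inter_subset_right)
      have hcards : (S ∩ A).card + (S ∩ Aᶜ).card = m := by
        rw [← Finset.card_union_of_disjoint hdisj, hdecomp, hS.1.2]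
      refine ⟨⟨Finset.inter_subset_right, hS.2⟩, ⟨Finset.inter_subset_right, ?_⟩⟩
      show (S ∩ Aᶜ).card = m - k
      have h2 := hS.2
      omega
    · intro p hp
      rw [Finset.mem_product, Finset.mem_powersetCard, Finset.mem_powersetCard] at hp
      rw [Finset.mem_filter, Finset.mem_powersetCard]
      have hdisj : Disjoint p.1 p.2 := disjoint_of_subsets hp.1.1 hp.2.1
      have hV : Disjoint p.2 A := by
        rw [Finset.disjoint_left]
        intro y hy hyA
        exact (Finset.mem_compl.mp (hp.2.1 hy)) hyA
      constructor
      · constructor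
        · exact Finset.subset_univ _
        · rw [Finset.card_union_of_disjoint hdisj, hp.1.2, hp.2.2]
          omega
      · rw [union_inter_eq hp.1.1 hV, hp.1.2]
    · intro S hS
      rw [← Finset.inter_union_distrib_left, Finset.union_compl, Finset.inter_univ]
    · intro p hp
      rw [Finset.mem_product, Finset.mem_powersetCard, Finset.mem_powersetCard] at hp
      have hV : Disjoint p.2 A := by
        rw [Finset.disjoint_left]
        intro y hy hyA
        exact (Finset.mem_compl.mp (hp.2.1 hy)) hyA
      have hU : Disjoint p.1 Aᶜ := by
        rw [Finset.disjoint_left]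
        intro y hy hyA
        exact (Finset.mem_compl.mp hyA) (hp.1.1 hy)
      have e1 : (p.1 ∪ p.2) ∩ A = p.1 := union_inter_eq hp.1.1 hV
      have e2 : (p.1 ∪ p.2) ∩ Aᶜ = p.2 := by
        rw [Finset.union_comm]
        exact union_inter_eq hp.2.1 hU
      rw [e1, e2]
    · intro S hS
      congr 1
      rw [← Finset.inter_union_distrib_left, Finset.union_compl, Finset.inter_univ]

  rw [hprod]
  exact Finset.sum_product _ _ _

private lemma distUnif_nonneg {Z : Type*} [Fintype Z] (P : Z → ℝ) : 0 ≤ distUnif P := by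
  unfold distUnif
  have h : (0:ℝ) ≤ ∑ z, |P z - 1/(Fintype.card Z : ℝ)| :=
    Finset.sum_nonneg fun z _ => abs_nonneg _
  linarith

private lemma mem_bal_iff {𝒳 : Type} [Fintype 𝒳] [DecidableEq 𝒳] {m : ℕ}
    (hn : Fintype.card 𝒳 = 2*m) (f : 𝒳 → Bool) :
    f ∈ Bal 𝒳 ↔ (univ.filter (fun x => f x = true)).card = m := by
  unfold Bal
  rw [Finset.mem_filter]
  have hsum := Finset.card_filter_add_card_filter_not
    (s := (univ : Finset 𝒳)) (p := fun x => f x = true)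
  rw [Finset.card_univ, hn] at hsum
  have hneg : (univ.filter (fun x => ¬ (f x = true))) = (univ.filter (fun x => f x = false)) := by
    apply Finset.filter_congr; intro x _; simp
  rw [hneg] at hsum
  constructor
  · rintro ⟨-, h⟩; omega
  · intro h; exact ⟨Finset.mem_univ f, by omega⟩

private lemma bal_maps {𝒳 : Type} [Fintype 𝒳] [DecidableEq 𝒳] {m : ℕ}
    (hn : Fintype.card 𝒳 = 2*m) :
    (∀ f ∈ Bal 𝒳, (univ.filter (fun x => f x = true)) ∈ (univ : Finset 𝒳).powersetCard m)
    ∧ (∀ S ∈ (univ : Finset 𝒳).powersetCard m, (fun x => decide (x ∈ S)) ∈ Bal 𝒳)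
    ∧ (∀ f ∈ Bal 𝒳, (fun x => decide (x ∈ univ.filter (fun x => f x = true))) = f)
    ∧ (∀ S ∈ (univ : Finset 𝒳).powersetCard m,
        univ.filter (fun x => decide (x ∈ S) = true) = S) := by
  refine ⟨?_, ?_, ?_, ?_⟩
  · intro f hf
    rw [Finset.mem_powersetCard]
    exact ⟨Finset.subset_univ _, (mem_bal_iff hn f).mp hf⟩
  · intro S hS
    rw [Finset.mem_powersetCard] at hS
    rw [mem_bal_iff hn]
    have h : univ.filter (fun x => decide (x ∈ S) = true) = S := by
      ext x; simp
    rw [h]; exact hS.2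
  · intro f _
    funext x; simp
  · intro S _
    ext x; simp

private lemma sum_bal_eq {𝒳 : Type} [Fintype 𝒳] [DecidableEq 𝒳] {m : ℕ}
    (hn : Fintype.card 𝒳 = 2*m) (g : Finset 𝒳 → ℝ) :
    ∑ f ∈ Bal 𝒳, g (univ.filter (fun x => f x = true))
      = ∑ S ∈ (univ : Finset 𝒳).powersetCard m, g S := by
  obtain ⟨h1, h2, h3, h4⟩ := bal_maps hn
  exact Finset.sum_nbij' (i := fun f => univ.filter (fun x => f x = true))
    (j := fun S => fun x => decide (x ∈ S)) h1 h2 h3 h4 (fun f _ => rfl)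

private lemma card_bal {𝒳 : Type} [Fintype 𝒳] [DecidableEq 𝒳] {m : ℕ}
    (hn : Fintype.card 𝒳 = 2*m) : (Bal 𝒳).card = (2*m).choose m := by
  obtain ⟨h1, h2, h3, h4⟩ := bal_maps hn
  have h : (Bal 𝒳).card = ((univ : Finset 𝒳).powersetCard m).card :=
    Finset.card_nbij' (i := fun f => univ.filter (fun x => f x = true))
      (j := fun S => fun x => decide (x ∈ S)) h1 h2 h3 h4
  rw [h, Finset.card_powersetCard, Finset.card_univ, hn]

private lemma distUnif_bool (P : Bool → ℝ) (h : P false + P true = 1) :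
    distUnif P = |P true - 1/2| := by
  unfold distUnif
  rw [Fintype.sum_bool]
  have hc : ((Fintype.card Bool : ℕ) : ℝ) = 2 := by simp
  rw [hc]
  have h2 : P false - 1/2 = -(P true - 1/2) := by linarith
  rw [h2, abs_neg]
  ring

private lemma double_sum_helper {α β : Type*} (s : Finset α) (t : Finset β)
    (c : ℝ) (f : α → ℝ) (g : β → ℝ) :
    ∑ U ∈ s, ∑ V ∈ t, c * (f U + g V)
    = c * ((t.card : ℝ) * ∑ U ∈ s, f U + (s.card : ℝ) * ∑ V ∈ t, g V) := by
  calc ∑ U ∈ s, ∑ V ∈ t, c * (f U + g V)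
      = ∑ U ∈ s, (c * ((t.card:ℝ) * f U + ∑ V ∈ t, g V)) := by
        apply Finset.sum_congr rfl
        intro U _
        rw [← Finset.mul_sum, Finset.sum_add_distrib, Finset.sum_const, nsmul_eq_mul]
    _ = c * ((t.card:ℝ) * ∑ U ∈ s, f U + (s.card:ℝ) * ∑ V ∈ t, g V) := by
        rw [← Finset.mul_sum, Finset.sum_add_distrib, ← Finset.mul_sum, Finset.sum_const,
          nsmul_eq_mul]

/-- **Hashing Lemma (paper: Lemma `lem:rel`)**: let `X` be a random variable on a finite
set `𝒳` of even cardinality `|𝒳| ≥ 2` and let `F` be a uniform balanced random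
predicate on `𝒳`, independent of `X`. Then `d(X) ≤ (3/2)·√|𝒳|·d(F(X)|F)`, where
`d(F(X)|F) = ∑_f P_F(f)·d(P_{f(X)})`. -/
theorem hashing_lemma {𝒳 : Type} [Fintype 𝒳] [DecidableEq 𝒳]
    (heven : Even (Fintype.card 𝒳)) (hcard : 2 ≤ Fintype.card 𝒳)
    (PX : 𝒳 → ℝ) (hPX0 : ∀ x, 0 ≤ PX x) (hPX1 : ∑ x, PX x = 1) :
    distUnif PX ≤ (3 / 2) * Real.sqrt (Fintype.card 𝒳) *
      ∑ f, PF f * distUnif (fun b => ∑ x ∈ univ.filter (fun x => f x = b), PX x) := by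
  classical
  obtain ⟨m, hm⟩ := heven
  have hnm : Fintype.card 𝒳 = 2*m := by omega
  have hm1 : 1 ≤ m := by omega
  have hcard0 : (0:ℝ) < (Fintype.card 𝒳 : ℝ) := by
    exact_mod_cast (by omega : 0 < Fintype.card 𝒳)
  set q : 𝒳 → ℝ := fun x => PX x - 1/(Fintype.card 𝒳 : ℝ) with hqdef
  have hqsum : ∑ x, q x = 0 := by
    rw [hqdef, Finset.sum_sub_distrib, hPX1, Finset.sum_const, Finset.card_univ, nsmul_eq_mul]
    field_simp
    ring
  set L1 : ℝ := ∑ x, |q x| with hL1def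
  have hL1nonneg : 0 ≤ L1 := Finset.sum_nonneg fun x _ => abs_nonneg _
  have hLHS : distUnif PX = L1/2 := by
    rw [hL1def, hqdef]
    unfold distUnif
    ring
  -- rewrite the RHS sum
  have hRHS : ∑ f, PF f * distUnif (fun b => ∑ x ∈ univ.filter (fun x => f x = b), PX x)
      = (((2*m).choose m : ℝ))⁻¹
        * ∑ S ∈ (univ : Finset 𝒳).powersetCard m, |∑ x ∈ S, q x| := by
    have step1 : ∀ f : 𝒳 → Bool,
        PF f * distUnif (fun b => ∑ x ∈ univ.filter (fun x => f x = b), PX x)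
        = if f ∈ Bal 𝒳 then
            ((Bal 𝒳).card : ℝ)⁻¹ * |∑ x ∈ univ.filter (fun x => f x = true), q x| else 0 := by
      intro f
      unfold PF
      by_cases hf : f ∈ Bal 𝒳
      · rw [if_pos hf, if_pos hf]
        congr 1
        have hsum1 : (∑ x ∈ univ.filter (fun x => f x = false), PX x)
            + (∑ x ∈ univ.filter (fun x => f x = true), PX x) = 1 := by
          rw [← hPX1]
          have hneg : (univ.filter (fun x => f x = false))
              = (univ.filter (fun x => ¬ (f x = true))) := by
            apply Finset.filter_congr; intro x _; simp
          rw [hneg, add_comm]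
          exact Finset.sum_filter_add_sum_filter_not univ _ PX
        rw [distUnif_bool _ hsum1]
        have hcardf : (univ.filter (fun x => f x = true)).card = m := (mem_bal_iff hnm f).mp hf
        have hPq : ∑ x ∈ univ.filter (fun x => f x = true), PX x
            = (∑ x ∈ univ.filter (fun x => f x = true), q x) + 1/2 := by
          have h1 : ∀ x ∈ univ.filter (fun x => f x = true),
              PX x = q x + 1/(Fintype.card 𝒳 : ℝ) := by
            intro x _; rw [hqdef]; ring
          rw [Finset.sum_congr rfl h1, Finset.sum_add_distrib, Finset.sum_const, hcardf,
            nsmul_eq_mul]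
          have h2 : (m:ℝ) * (1/(Fintype.card 𝒳:ℝ)) = 1/2 := by
            rw [hnm]
            have hm0 : (m:ℝ) ≠ 0 := Nat.cast_ne_zero.mpr (by omega)
            push_cast
            field_simp
          linarith
        rw [hPq]
        congr 1
        ring
      · rw [if_neg hf, if_neg hf, zero_mul]
    rw [Finset.sum_congr rfl (fun f _ => step1 f)]
    rw [Finset.sum_ite_mem, Finset.univ_inter, ← Finset.mul_sum, card_bal hnm]
    congr 1
    exact sum_bal_eq hnm (fun S => |∑ x ∈ S, q x|)
  rw [hLHS, hRHS]
  -- positive / negative parts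
  set A := univ.filter (fun x => 0 < q x) with hAdef
  set a := A.card with hadef
  set b := (Aᶜ).card with hbdef
  have hab : a + b = 2*m := by rw [hadef, hbdef, Finset.card_add_card_compl, hnm]
  have habR : (a:ℝ) + b = 2*(m:ℝ) := by exact_mod_cast hab
  have hSA : ∑ x ∈ A, q x = L1/2 ∧ ∑ x ∈ Aᶜ, q x = -(L1/2) := by
    have h1 : ∑ x ∈ A, q x + ∑ x ∈ Aᶜ, q x = 0 := by
      rw [Finset.sum_add_sum_compl, hqsum]
    have h2 : ∑ x ∈ A, |q x| = ∑ x ∈ A, q x := by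
      apply Finset.sum_congr rfl
      intro x hx
      rw [hAdef, Finset.mem_filter] at hx
      exact abs_of_pos hx.2
    have h3 : ∑ x ∈ Aᶜ, |q x| = -∑ x ∈ Aᶜ, q x := by
      rw [← Finset.sum_neg_distrib]
      apply Finset.sum_congr rfl
      intro x hx
      rw [Finset.mem_compl, hAdef, Finset.mem_filter] at hx
      have : ¬ (0 < q x) := fun hc => hx ⟨Finset.mem_univ x, hc⟩
      exact abs_of_nonpos (not_lt.mp this)
    have h4 : L1 = ∑ x ∈ A, |q x| + ∑ x ∈ Aᶜ, |q x| := by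
      rw [hL1def, Finset.sum_add_sum_compl]
    constructor <;> linarith
  set Sabs : ℝ := ∑ S ∈ (univ : Finset 𝒳).powersetCard m, |∑ x ∈ S, q x| with hSdef
  have hSabsnn : 0 ≤ Sabs := Finset.sum_nonneg fun S _ => abs_nonneg _
  have hCpos : (0:ℝ) < ((2*m).choose m : ℝ) := by
    exact_mod_cast Nat.choose_pos (by omega : m ≤ 2*m)
  have hsqrtnn : (0:ℝ) ≤ Real.sqrt (Fintype.card 𝒳) := Real.sqrt_nonneg _
  by_cases hL0 : L1 = 0
  · rw [hL0]
    have hrhs : 0 ≤ (3/2) * Real.sqrt (Fintype.card 𝒳)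
        * ((((2*m).choose m : ℝ))⁻¹ * Sabs) := by positivity
    linarith
  have hL1pos : 0 < L1 := lt_of_le_of_ne hL1nonneg (Ne.symm hL0)
  have ha1 : 1 ≤ a := by
    by_contra h
    have hA0 : A = ∅ := Finset.card_eq_zero.mp (by omega)
    have := hSA.1
    rw [hA0, Finset.sum_empty] at this
    linarith
  have hb1 : 1 ≤ b := by
    by_contra h
    have hA0 : Aᶜ = ∅ := Finset.card_eq_zero.mp (by omega)
    have := hSA.2
    rw [hA0, Finset.sum_empty] at this
    linarith
  have habpos : (0:ℝ) < (a:ℝ)*b := by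
    have h1 : (0:ℝ) < (a:ℝ) := by exact_mod_cast ha1
    have h2 : (0:ℝ) < (b:ℝ) := by exact_mod_cast hb1
    positivity
  -- sign function
  set σ : ℕ → ℝ := fun k =>
    if (a:ℝ)*m < 2*(m:ℝ)*k then 1 else if 2*(m:ℝ)*k < (a:ℝ)*m then -1 else 0 with hσdef
  have hσabs : ∀ k, |σ k| ≤ 1 := by
    intro k
    rw [hσdef]
    dsimp only
    split
    · norm_num
    · split <;> norm_num
  have hσmul : ∀ k : ℕ, σ k * (2*(m:ℝ)*k - a*m) = |2*(m:ℝ)*k - (a:ℝ)*m| := by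
    intro k
    rw [hσdef]
    dsimp only
    rcases lt_trichotomy ((a:ℝ)*m) (2*(m:ℝ)*k) with h | h | h
    · rw [if_pos h, abs_of_pos (by linarith)]; ring
    · rw [if_neg (by linarith), if_neg (by linarith),
        show 2*(m:ℝ)*k - (a:ℝ)*m = 0 by linarith]
      simp
    · rw [if_neg (by linarith), if_pos h, abs_of_neg (by linarith)]; ring
  set T : ℝ := ∑ S ∈ (univ : Finset 𝒳).powersetCard m, σ ((S ∩ A).card) * (∑ x ∈ S, q x)
    with hTdef
  have hTle : T ≤ Sabs := by
    rw [hTdef, hSdef]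
    apply Finset.sum_le_sum
    intro S hS
    calc σ ((S ∩ A).card) * (∑ x ∈ S, q x)
        ≤ |σ ((S ∩ A).card) * (∑ x ∈ S, q x)| := le_abs_self _
      _ = |σ ((S ∩ A).card)| * |∑ x ∈ S, q x| := abs_mul _ _
      _ ≤ 1 * |∑ x ∈ S, q x| := mul_le_mul_of_nonneg_right (hσabs _) (abs_nonneg _)
      _ = |∑ x ∈ S, q x| := one_mul _
  -- the exact computation of a*b*T
  set Hval : ℝ := (((a+1)/2 : ℕ):ℝ) * (((b+1)/2 : ℕ):ℝ)
      * (a.choose ((a+1)/2) : ℝ) * (b.choose (m - (a+1)/2) : ℝ) with hHdef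
  have hSU : ∀ k : ℕ, (a:ℝ) * (∑ U ∈ A.powersetCard k, ∑ x ∈ U, q x)
      = (k:ℝ) * (a.choose k : ℝ) * (L1/2) := by
    intro k
    cases k with
    | zero => simp [Finset.powersetCard_zero]
    | succ j =>
      rw [sum_psc_weight A q j, ← hadef, hSA.1]
      have hid : a * ((a-1).choose j) = (a.choose (j+1)) * (j+1) := by
        have h := Nat.add_one_mul_choose_eq (a-1) j
        have ha' : a - 1 + 1 = a := by omega
        rw [ha'] at h
        simpa [Nat.succ_eq_add_one] using h
      have hidR : (a:ℝ) * (((a-1).choose j):ℝ) = ((a.choose (j+1)):ℝ) * ((j:ℝ)+1) := by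
        exact_mod_cast congrArg (fun t : ℕ => (t:ℝ)) hid
      push_cast
      linear_combination (L1/2) * hidR
  have hSV : ∀ k ∈ Finset.range (m+1), (b:ℝ) * (∑ V ∈ Aᶜ.powersetCard (m-k), ∑ x ∈ V, q x)
      = -((((m:ℝ) - k) * (b.choose (m-k) : ℝ)) * (L1/2)) := by
    intro k hk
    rw [Finset.mem_range] at hk
    rcases Nat.eq_zero_or_pos (m-k) with h0 | hpos
    · rw [h0]
      have hmk : (m:ℝ) - k = 0 := by
        have : m = k := by omega
        rw [this]; ring
      simp [Finset.powersetCard_zero, hmk]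
    · obtain ⟨j, hj⟩ : ∃ j, m-k = j+1 := ⟨m-k-1, by omega⟩
      rw [hj, sum_psc_weight (Aᶜ) q j, ← hbdef, hSA.2]
      have hid : b * ((b-1).choose j) = (b.choose (j+1)) * (j+1) := by
        have h := Nat.add_one_mul_choose_eq (b-1) j
        have hb' : b - 1 + 1 = b := by omega
        rw [hb'] at h
        simpa [Nat.succ_eq_add_one] using h
      have hidR : (b:ℝ) * (((b-1).choose j):ℝ) = ((b.choose (j+1)):ℝ) * ((j:ℝ)+1) := by
        exact_mod_cast congrArg (fun t : ℕ => (t:ℝ)) hid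
      have hmkR : (m:ℝ) - k = (j:ℝ)+1 := by
        have : m = k + (j+1) := by omega
        rw [this]; push_cast; ring
      rw [hmkR]
      push_cast
      linear_combination (-(L1/2)) * hidR
  have hcompute : (a:ℝ) * b * T = L1 * Hval := by
    rw [hTdef, sum_split m A (fun S => σ ((S ∩ A).card) * (∑ x ∈ S, q x))]
    have hinner : ∀ k ∈ Finset.range (m+1),
        (∑ U ∈ A.powersetCard k, ∑ V ∈ Aᶜ.powersetCard (m-k),
          σ (((U ∪ V) ∩ A).card) * (∑ x ∈ U ∪ V, q x))
        = σ k * ( ((Aᶜ.powersetCard (m-k)).card : ℝ)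
              * (∑ U ∈ A.powersetCard k, ∑ x ∈ U, q x)
            + ((A.powersetCard k).card : ℝ)
              * (∑ V ∈ Aᶜ.powersetCard (m-k), ∑ x ∈ V, q x) ) := by
      intro k hk
      have hstep : ∀ U ∈ A.powersetCard k, ∀ V ∈ Aᶜ.powersetCard (m-k),
          σ (((U ∪ V) ∩ A).card) * (∑ x ∈ U ∪ V, q x)
          = σ k * ((∑ x ∈ U, q x) + (∑ x ∈ V, q x)) := by
        intro U hU V hV
        rw [Finset.mem_powersetCard] at hU hV
        have hVA : Disjoint V A := by
          rw [Finset.disjoint_left]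
          intro y hy hyA
          exact (Finset.mem_compl.mp (hV.1 hy)) hyA
        rw [union_inter_eq hU.1 hVA, hU.2,
          Finset.sum_union (disjoint_of_subsets hU.1 hV.1)]
      rw [Finset.sum_congr rfl (fun U hU =>
        Finset.sum_congr rfl (fun V hV => hstep U hU V hV))]
      exact double_sum_helper _ _ _ _ _
    rw [Finset.sum_congr rfl hinner, Finset.mul_sum]
    have hperk : ∀ k ∈ Finset.range (m+1),
        (a:ℝ) * b * (σ k * ( ((Aᶜ.powersetCard (m-k)).card : ℝ)
              * (∑ U ∈ A.powersetCard k, ∑ x ∈ U, q x)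
            + ((A.powersetCard k).card : ℝ)
              * (∑ V ∈ Aᶜ.powersetCard (m-k), ∑ x ∈ V, q x) ))
        = (L1/2) * (|2*(m:ℝ)*k - (a:ℝ)*m| * (a.choose k : ℝ) * (b.choose (m-k) : ℝ)) := by
      intro k hk
      rw [Finset.card_powersetCard, Finset.card_powersetCard, ← hadef, ← hbdef]
      have e1 := hSU k
      have e2 := hSV k hk
      have e3 := hσmul k
      linear_combination (σ k * (b:ℝ) * ((b.choose (m-k)):ℝ)) * e1
        + (σ k * (a:ℝ) * ((a.choose k):ℝ)) * e2
        + ((L1/2) * ((a.choose k):ℝ) * ((b.choose (m-k)):ℝ)) * e3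
        + ((L1/2) * ((a.choose k):ℝ) * ((b.choose (m-k)):ℝ) * σ k * (k:ℝ)) * habR
    rw [Finset.sum_congr rfl hperk, ← Finset.mul_sum]
    have hkey := key_sum a b m hm1 ha1 hb1 hab
    obtain ⟨p, hp⟩ : ∃ p, (a+1)/2 = p := ⟨_, rfl⟩
    obtain ⟨r, hr⟩ : ∃ r, (b+1)/2 = r := ⟨_, rfl⟩
    rw [hp, hr] at hkey
    have h := congrArg (fun z : ℤ => (z:ℝ)) hkey
    push_cast at h
    rw [h, hHdef, hp, hr]
    push_cast
    ring
  -- final assembly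
  have hstar := star_ineq a b m hm1 ha1 hb1 hab
  have hsqrtarg : ((Fintype.card 𝒳 : ℕ) : ℝ) = 2*(m:ℝ) := by exact_mod_cast hnm
  rw [hsqrtarg]
  have hHnn : 0 ≤ Hval := by rw [hHdef]; positivity
  have hsq2 : (0:ℝ) ≤ Real.sqrt (2*(m:ℝ)) := Real.sqrt_nonneg _
  have h5 : L1 * Hval ≤ (a:ℝ)*b*Sabs := by
    rw [← hcompute]
    exact mul_le_mul_of_nonneg_left hTle habpos.le
  have h6 : L1 * ((a:ℝ)*b*((2*m).choose m : ℝ))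
      ≤ L1 * (3 * Real.sqrt (2*(m:ℝ)) * Hval) := by
    apply mul_le_mul_of_nonneg_left _ hL1pos.le
    rw [hHdef]
    exact hstar
  have h7 : 3 * Real.sqrt (2*(m:ℝ)) * (L1 * Hval)
      ≤ 3 * Real.sqrt (2*(m:ℝ)) * ((a:ℝ)*b*Sabs) := by
    apply mul_le_mul_of_nonneg_left h5 (by positivity)
  have h8 : (L1 * ((2*m).choose m : ℝ)) * ((a:ℝ)*b)
      ≤ (3 * Real.sqrt (2*(m:ℝ)) * Sabs) * ((a:ℝ)*b) := by linarith [h6, h7]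
  have h9 : L1 * ((2*m).choose m : ℝ) ≤ 3 * Real.sqrt (2*(m:ℝ)) * Sabs :=
    le_of_mul_le_mul_right h8 habpos
  have hform : (3:ℝ)/2 * Real.sqrt (2*(m:ℝ)) * ((((2*m).choose m : ℝ))⁻¹ * Sabs)
      = (3 * Real.sqrt (2*(m:ℝ)) * Sabs) / (2 * ((2*m).choose m : ℝ)) := by
    field_simp
  rw [hform]
  rw [le_div_iff₀ (by positivity)]
  linarith [h9]
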